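/- Let H be an infinite-dimensional separable complex Hilbert space and f : G_∞(H) → G_∞(H) a map sending every pair of subspaces to an equivalent pair, with associated decomposition f(X) = L(X) ⊕ O(X) (L a linear or conjugate-linear isometry, O(X) ⊥ range(L)). If O(X) = 0 for some X ∈ G_∞(H), then O(Y) = 0 for every Y ∈ G_∞(H), i.e., f(Y) = L(Y) for all Y. -/

import Mathlib

set_option linter.unusedSectionVars false
set_option maxHeartbeats 1000000

open scoped InnerProductSpace


variable {H : Type} [NormedAddCommGroup H] [InnerProductSpace ℂ H] [CompleteSpace H]

/-- Membership in the Grassmannian `G_∞(H)`. -/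
def inGinf (X : Submodule ℂ H) : Prop :=
  IsClosed (X : Set H) ∧ ¬ FiniteDimensional ℂ X ∧ ¬ FiniteDimensional ℂ Xᗮ

/-- `f` sends every pair of subspaces of `G_∞(H)` to an equivalent pair. -/
def SendsPairsToEquiv (f : Submodule ℂ H → Submodule ℂ H) : Prop :=
  ∀ X Y : Submodule ℂ H, inGinf X → inGinf Y →
    ∃ L : H →ₗᵢ[ℂ] H,
      ({f X, f Y} : Set (Submodule ℂ H)) = {X.map L.toLinearMap, Y.map L.toLinearMap}

/-- `L : H → H` is a linear or conjugate-linear isometry. -/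
def IsLinOrConjIsometry (L : H → H) : Prop :=
  (∃ T : H →ₗᵢ[ℂ] H, ∀ x, L x = T x) ∨
  (∃ T : H →ₛₗᵢ[starRingEnd ℂ] H, ∀ x, L x = T x)

/-- `L` and `O` decompose `f` as in the structure theorem. -/
def Decomposes (f : Submodule ℂ H → Submodule ℂ H) (L : H → H)
    (O : Submodule ℂ H → Submodule ℂ H) : Prop :=
  ∀ X : Submodule ℂ H, inGinf X →
    IsClosed ((O X : Set H)) ∧
    (∀ y ∈ O X, ∀ x : H, inner ℂ (L x) y = (0 : ℂ)) ∧
    f X = Submodule.span ℂ (L '' X) ⊔ O X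


/-- inner products vanish on the closure of a span if they vanish on generators -/
lemma ipz (v : ℕ → H) (y : H) (h : ∀ n, ⟪v n, y⟫_ℂ = 0) :
    ∀ z ∈ (Submodule.span ℂ (Set.range v)).topologicalClosure, ⟪z, y⟫_ℂ = 0 := by
  have hle : (Submodule.span ℂ (Set.range v)).topologicalClosure ≤ (innerSL ℂ y).ker := by
    refine Submodule.topologicalClosure_minimal _ ?_ (ContinuousLinearMap.isClosed_ker _)
    rw [Submodule.span_le]
    rintro _ ⟨n, rfl⟩
    simp only [SetLike.mem_coe, LinearMap.mem_ker]
    have := inner_eq_zero_symm.mp (h n)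
    simpa using this
  intro z hz
  have h2 : ⟪y, z⟫_ℂ = 0 := by simpa using hle hz
  exact inner_eq_zero_symm.mp h2

lemma mem_cl_span (v : ℕ → H) (n : ℕ) :
    v n ∈ (Submodule.span ℂ (Set.range v)).topologicalClosure :=
  Submodule.le_topologicalClosure _ (Submodule.subset_span ⟨n, rfl⟩)

lemma selfkill (v : ℕ → H) {z : H}
    (hz : z ∈ (Submodule.span ℂ (Set.range v)).topologicalClosure)
    (h : ∀ n, ⟪v n, z⟫_ℂ = 0) : z = 0 :=
  inner_self_eq_zero.mp (ipz v z h z hz)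

lemma notFD (S : Submodule ℂ H) (v : ℕ → H) (hz : ∀ n, v n ≠ 0)
    (ho : Pairwise fun i j => ⟪v i, v j⟫_ℂ = 0) (hS : ∀ n, v n ∈ S) :
    ¬ FiniteDimensional ℂ S := by
  intro hFD
  have h1 : LinearIndependent ℂ v := linearIndependent_of_ne_zero_of_inner_eq_zero hz ho
  have h2 : LinearIndependent ℂ (fun n => (⟨v n, hS n⟩ : S)) :=
    LinearIndependent.of_comp S.subtype (by exact h1)
  exact Module.Finite.not_linearIndependent_of_infinite _ h2

lemma exists_unit_orth (D : Submodule ℂ H) (hD : ¬ FiniteDimensional ℂ D) (l : List H) :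
    ∃ u, u ∈ D ∧ ⟪u, u⟫_ℂ = 1 ∧ ∀ a ∈ l, ⟪a, u⟫_ℂ = 0 := by
  classical
  have hex : ∃ d : D, d ≠ 0 ∧ ∀ a ∈ l, ⟪a, (d : H)⟫_ℂ = 0 := by
    by_contra hcon
    push_neg at hcon
    set φ : D →ₗ[ℂ] ({ a // a ∈ l.toFinset } → ℂ) :=
      LinearMap.pi (fun a => ((innerSL ℂ (a : H)).toLinearMap).comp D.subtype) with hφ
    have hinj : Function.Injective φ := by
      rw [← LinearMap.ker_eq_bot, LinearMap.ker_eq_bot']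
      intro d hd
      by_contra hd0
      obtain ⟨a, ha, hane⟩ := hcon d hd0
      apply hane
      have := congrFun hd ⟨a, List.mem_toFinset.mpr ha⟩
      simpa [hφ] using this
    exact hD (FiniteDimensional.of_injective φ hinj)
  obtain ⟨d, hd0, hdorth⟩ := hex
  have hdH0 : (d : H) ≠ 0 := by simpa using hd0
  have hn0 : (‖(d : H)‖ : ℂ) ≠ 0 := by
    simpa using norm_ne_zero_iff.mpr hdH0
  refine ⟨((‖(d : H)‖ : ℂ))⁻¹ • (d : H), D.smul_mem _ d.2, ?_, ?_⟩
  · rw [inner_smul_left, inner_smul_right, inner_self_eq_norm_sq_to_K, map_inv₀,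
      Complex.conj_ofReal]
    field_simp
    norm_cast
  · intro a ha
    rw [inner_smul_right, hdorth a ha, mul_zero]

open scoped Classical in
noncomputable def pickv (D : Submodule ℂ H) (l : List H) : H :=
  if h : FiniteDimensional ℂ D then 0 else (exists_unit_orth D h l).choose

lemma pickv_spec {D : Submodule ℂ H} (hD : ¬ FiniteDimensional ℂ D) (l : List H) :
    pickv D l ∈ D ∧ ⟪pickv D l, pickv D l⟫_ℂ = 1 ∧ ∀ a ∈ l, ⟪a, pickv D l⟫_ℂ = 0 := by
  classical
  rw [pickv, dif_neg hD]
  exact (exists_unit_orth D hD l).choose_spec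

noncomputable def seqL (X V : Submodule ℂ H) : ℕ → List H
  | 0 => []
  | (n+1) => seqL X V n ++ [pickv (if n % 2 = 0 then X else V) (seqL X V n)]

noncomputable def useq (X V : Submodule ℂ H) (n : ℕ) : H :=
  pickv (if n % 2 = 0 then X else V) (seqL X V n)

lemma seqL_eq (X V : Submodule ℂ H) (n : ℕ) :
    seqL X V n = (List.range n).map (useq X V) := by
  induction n with
  | zero => rfl
  | succ n ih =>
    rw [seqL, List.range_succ, List.map_append,
      show List.map (useq X V) [n] = [pickv (if n % 2 = 0 then X else V) (seqL X V n)] from rfl,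
      ih]

variable {X V : Submodule ℂ H}

lemma useq_spec (hX : ¬ FiniteDimensional ℂ X) (hV : ¬ FiniteDimensional ℂ V) (n : ℕ) :
    useq X V n ∈ (if n % 2 = 0 then X else V) ∧ ⟪useq X V n, useq X V n⟫_ℂ = 1 ∧
      ∀ m, m < n → ⟪useq X V m, useq X V n⟫_ℂ = 0 := by
  have hD : ¬ FiniteDimensional ℂ (if n % 2 = 0 then X else V : Submodule ℂ H) := by
    by_cases h : n % 2 = 0
    · rw [if_pos h]; exact hX
    · rw [if_neg h]; exact hV
  obtain ⟨h1, h2, h3⟩ := pickv_spec hD (seqL X V n)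
  refine ⟨h1, h2, fun m hm => h3 _ ?_⟩
  rw [seqL_eq]
  exact List.mem_map_of_mem (List.mem_range.mpr hm)

lemma useq_orth (hX : ¬ FiniteDimensional ℂ X) (hV : ¬ FiniteDimensional ℂ V)
    {a b : ℕ} (hab : a ≠ b) : ⟪useq X V a, useq X V b⟫_ℂ = 0 := by
  rcases lt_or_gt_of_ne hab with h | h
  · exact (useq_spec hX hV b).2.2 a h
  · exact inner_eq_zero_symm.mp ((useq_spec hX hV a).2.2 b h)

lemma useq_mem_even (hX : ¬ FiniteDimensional ℂ X) (hV : ¬ FiniteDimensional ℂ V) (k : ℕ) :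
    useq X V (2*k) ∈ X := by
  have := (useq_spec hX hV (2*k)).1
  simpa [Nat.mul_mod_right] using this

lemma useq_mem_odd (hX : ¬ FiniteDimensional ℂ X) (hV : ¬ FiniteDimensional ℂ V) (k : ℕ) :
    useq X V (2*k+1) ∈ V := by
  have := (useq_spec hX hV (2*k+1)).1
  have h2 : (2*k+1) % 2 = 1 := by omega
  simpa [h2] using this

lemma Lprops {L : H → H} (hL : IsLinOrConjIsometry L) :
    Function.Injective L ∧ (∀ a b : H, L a - L b = L (a - b)) ∧
      (∀ Z : Submodule ℂ H, ∃ S : Submodule ℂ H, (S : Set H) = L '' Z ∧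
        Submodule.span ℂ (L '' Z) = S) := by
  rcases hL with ⟨T, hT⟩ | ⟨T, hT⟩ <;>
  · have hLT : L = fun x => T x := funext hT
    subst hLT
    refine ⟨fun a b hab => T.injective hab, fun a b => (map_sub T a b).symm, fun Z => ?_⟩
    refine ⟨Z.map T.toLinearMap, ?_, ?_⟩
    · rw [Submodule.map_coe]
      rfl
    · rw [show ((fun x => T x) '' Z : Set H) = ↑(Z.map T.toLinearMap) by rw [Submodule.map_coe]; rfl]
      exact Submodule.span_eq _

section Moves
variable {f : Submodule ℂ H → Submodule ℂ H} {L : H → H} {O : Submodule ℂ H → Submodule ℂ H}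

lemma O_le_f (hdec : Decomposes f L O) {B : Submodule ℂ H} (hB : inGinf B) : O B ≤ f B := by
  rw [(hdec B hB).2.2]; exact le_sup_right

lemma downlem (hpair : SendsPairsToEquiv f) (hL : IsLinOrConjIsometry L)
    (hdec : Decomposes f L O) {A B : Submodule ℂ H} (hA : inGinf A) (hB : inGinf B)
    (hOA : O A = ⊥) (hBA : B ≤ A) : O B = ⊥ := by
  obtain ⟨hLinj, hLsub, hLmap⟩ := Lprops hL
  by_cases hAB : A = B
  · rw [← hAB]; exact hOA
  obtain ⟨SA, hSA, hspanA⟩ := hLmap A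
  obtain ⟨SB, hSB, hspanB⟩ := hLmap B
  have hfA : f A = SA := by rw [(hdec A hA).2.2, hOA, sup_bot_eq, hspanA]
  obtain ⟨T, hT⟩ := hpair A B hA hB
  rcases Set.pair_eq_pair_iff.mp hT with ⟨h1, h2⟩ | ⟨h1, h2⟩
  · -- f A = A.map T, f B = B.map T
    rw [eq_bot_iff]
    intro o ho
    rw [Submodule.mem_bot]
    have hofA : o ∈ SA := by
      have h3 : o ∈ B.map T.toLinearMap := by rw [← h2]; exact O_le_f hdec hB ho
      have h4 : o ∈ A.map T.toLinearMap := Submodule.map_mono hBA h3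
      rw [← h1, hfA] at h4
      exact h4
    have h5 : o ∈ L '' (A : Set H) := by rw [← hSA]; exact hofA
    obtain ⟨a, _, ha⟩ := h5
    have h6 := (hdec B hB).2.1 o ho a
    rw [ha] at h6
    exact inner_self_eq_zero.mp h6
  · -- f A = B.map T, f B = A.map T : show A = B, contradiction
    exfalso
    apply hAB
    refine le_antisymm ?_ hBA
    intro a haA
    have h3 : L a ∈ SA := by rw [← SetLike.mem_coe, hSA]; exact ⟨a, haA, rfl⟩
    have h4 : L a ∈ f B := by
      rw [h2]
      apply Submodule.map_mono hBA
      rw [← h1, hfA]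
      exact h3
    rw [(hdec B hB).2.2] at h4
    obtain ⟨s, hs, o, ho, hso⟩ := Submodule.mem_sup.mp h4
    rw [hspanB] at hs
    have hs' : s ∈ L '' (B : Set H) := by rw [← hSB]; exact hs
    obtain ⟨b, hbB, hb⟩ := hs'
    have hoLab : o = L (a - b) := by rw [← hLsub, ← hso, ← hb]; abel
    have h6 := (hdec B hB).2.1 o ho (a - b)
    rw [← hoLab] at h6
    have h7 : o = 0 := inner_self_eq_zero.mp h6
    rw [h7, add_zero] at hso
    have h8 : L a = L b := by rw [← hso, hb]
    have hab : a = b := hLinj h8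
    rw [hab]
    exact hbB

lemma hoplem (hpair : SendsPairsToEquiv f) (hL : IsLinOrConjIsometry L)
    (hdec : Decomposes f L O) {A B : Submodule ℂ H} (hA : inGinf A) (hB : inGinf B)
    (hOA : O A = ⊥)
    (hG1 : ∀ v ∈ A, (∀ b ∈ B, ⟪b, v⟫_ℂ = 0) → v = 0)
    (hG2 : ∀ v ∈ B, (∀ a ∈ A, ⟪a, v⟫_ℂ = 0) → v = 0) : O B = ⊥ := by
  obtain ⟨hLinj, hLsub, hLmap⟩ := Lprops hL
  by_cases hAB : A = B
  · rw [← hAB]; exact hOA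
  obtain ⟨SA, hSA, hspanA⟩ := hLmap A
  have hfA : f A = SA := by rw [(hdec A hA).2.2, hOA, sup_bot_eq, hspanA]
  obtain ⟨T, hT⟩ := hpair A B hA hB
  have hLA : ∀ u : H, u ∈ f A → ∃ a : H, a ∈ A ∧ L a = u := by
    intro u hu
    rw [hfA] at hu
    have : u ∈ L '' (A : Set H) := by rw [← hSA]; exact hu
    obtain ⟨a, ha, hau⟩ := this
    exact ⟨a, ha, hau⟩
  rw [eq_bot_iff]
  intro o ho
  rw [Submodule.mem_bot]
  have hofB : o ∈ f B := O_le_f hdec hB ho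
  rcases Set.pair_eq_pair_iff.mp hT with ⟨h1, h2⟩ | ⟨h1, h2⟩
  · -- f A = A.map T, f B = B.map T
    rw [h2] at hofB
    obtain ⟨b, hbB, hTb⟩ := Submodule.mem_map.mp hofB
    have hb0 : b = 0 := by
      apply hG2 b hbB
      intro a haA
      have e1 : ⟪a, b⟫_ℂ = ⟪T a, T b⟫_ℂ := (T.inner_map_map a b).symm
      have e2 : T a ∈ f A := by
        rw [h1]
        exact Submodule.mem_map_of_mem haA
      obtain ⟨a', _, ha'⟩ := hLA _ e2
      have e3 := (hdec B hB).2.1 o ho a'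
      rw [e1, show (T b : H) = o from hTb, ← ha']
      exact e3
    rw [← hTb, hb0, map_zero]
  · -- f A = B.map T, f B = A.map T
    rw [h2] at hofB
    obtain ⟨a, haA, hTa⟩ := Submodule.mem_map.mp hofB
    have ha0 : a = 0 := by
      apply hG1 a haA
      intro b hbB
      have e1 : ⟪b, a⟫_ℂ = ⟪T b, T a⟫_ℂ := (T.inner_map_map b a).symm
      have e2 : T b ∈ f A := by
        rw [h1]
        exact Submodule.mem_map_of_mem hbB
      obtain ⟨a', _, ha'⟩ := hLA _ e2
      have e3 := (hdec B hB).2.1 o ho a'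
      rw [e1, show (T a : H) = o from hTa, ← ha']
      exact e3
    rw [← hTa, ha0, map_zero]

end Moves

lemma onbseq [TopologicalSpace.SeparableSpace H] (K : Submodule ℂ H)
    (hc : IsClosed (K : Set H)) (hK : ¬ FiniteDimensional ℂ K) :
    ∃ g : ℕ → H, (∀ n, g n ∈ K) ∧ (∀ m n, ⟪g m, g n⟫_ℂ = if m = n then 1 else 0) ∧
      (∀ y ∈ K, (∀ n, ⟪g n, y⟫_ℂ = 0) → y = 0) := by
  classical
  haveI : CompleteSpace K := hc.completeSpace_coe
  haveI : SecondCountableTopology H :=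
    UniformSpace.secondCountable_of_separable H
  haveI : TopologicalSpace.SeparableSpace K :=
    TopologicalSpace.SecondCountableTopology.to_separableSpace
  obtain ⟨w, b, hb⟩ := exists_hilbertBasis ℂ K
  have hON : Orthonormal ℂ ((↑) : w → K) := by rw [← hb]; exact b.orthonormal
  haveI hcnt : Countable w := by
    apply Pairwise.countable_of_isOpen_disjoint
      (s := fun i : w => Metric.ball (i : K) (2⁻¹ : ℝ))
    · intro i j hij
      apply Metric.ball_disjoint_ball
      have hinner : ⟪(i : K), (j : K)⟫_ℂ = 0 := hON.2 hij
      have hsq : ‖(i : K) - (j : K)‖ ^ 2 = 2 := by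
        rw [norm_sub_sq (𝕜 := ℂ), hinner]
        simp [hON.1 i, hON.1 j]
        norm_num
      have hd : dist (i : K) (j : K) = ‖(i : K) - (j : K)‖ := dist_eq_norm _ _
      rw [hd]
      nlinarith [norm_nonneg ((i : K) - (j : K))]
    · intro i
      exact Metric.isOpen_ball
    · intro i
      exact Metric.nonempty_ball.mpr (by norm_num)
  haveI hinf : Infinite w := by
    rw [Set.infinite_coe_iff]
    intro hfin
    apply hK
    have hge : (Submodule.span ℂ (Set.range ((↑) : w → K)) : Submodule ℂ K).topologicalClosure = ⊤ := by
      have := b.dense_span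
      rwa [hb] at this
    have hrange : Set.range ((↑) : w → K) = (w : Set K) := Subtype.range_coe
    haveI hfd : FiniteDimensional ℂ (Submodule.span ℂ (Set.range ((↑) : w → K))) := by
      rw [hrange]
      exact FiniteDimensional.span_of_finite ℂ hfin
    have hclosed : IsClosed ((Submodule.span ℂ (Set.range ((↑) : w → K)) : Submodule ℂ K) : Set K) :=
      Submodule.closed_of_finiteDimensional _
    have htop : (Submodule.span ℂ (Set.range ((↑) : w → K)) : Submodule ℂ K) = ⊤ := by
      rw [← hge, hclosed.submodule_topologicalClosure_eq]
    rw [htop] at hfd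
    exact Module.Finite.equiv (Submodule.topEquiv : (⊤ : Submodule ℂ K) ≃ₗ[ℂ] K)
  obtain ⟨hde⟩ := nonempty_denumerable w
  let e : ℕ ≃ w := (Denumerable.eqv w).symm
  refine ⟨fun n => ((e n : w) : K), fun n => ((e n : w) : K).2, ?_, ?_⟩
  · intro m n
    have : ⟪((e m : w) : K), ((e n : w) : K)⟫_ℂ = if m = n then 1 else 0 := by
      by_cases h : m = n
      · subst h
        rw [if_pos rfl]
        have h1 : ‖((e m : w) : K)‖ = 1 := hON.1 (e m)
        rw [inner_self_eq_norm_sq_to_K, h1]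
        norm_num
      · rw [if_neg h]
        exact hON.2 (fun hc => h (e.injective hc))
    exact this
  · intro y hy hy0
    set yK : K := ⟨y, hy⟩ with hyK
    have hrepr : ∀ i : w, b.repr yK i = 0 := by
      intro i
      rw [b.repr_apply_apply]
      have hbi : b i = ((i : w) : K) := by rw [hb]
      rw [hbi]
      have : ((i : w) : K) = ((e (e.symm i) : w) : K) := by rw [e.apply_symm_apply]
      rw [this]
      exact hy0 (e.symm i)
    have : b.repr yK = 0 := lp.ext (funext hrepr)
    have hz : yK = 0 := by
      have := b.repr.injective (by rw [this, map_zero] : b.repr yK = b.repr 0)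
      exact this
    have : y = (yK : H) := rfl
    rw [this, hz]
    rfl

/-- Proposition: if `H` is separable and `O X = ⊥` for some
`X ∈ G_∞(H)`, then `O Y = ⊥` for every `Y ∈ G_∞(H)`, i.e. `f Y = L(Y)` for all `Y`. -/
theorem stmt16 [TopologicalSpace.SeparableSpace H] (hH : ¬ FiniteDimensional ℂ H)
    (f : Submodule ℂ H → Submodule ℂ H)
    (hf : ∀ X, inGinf X → inGinf (f X))
    (hpair : SendsPairsToEquiv f)
    (L : H → H) (hL : IsLinOrConjIsometry L)
    (O : Submodule ℂ H → Submodule ℂ H) (hdec : Decomposes f L O)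
    (hO : ∃ X : Submodule ℂ H, inGinf X ∧ O X = ⊥) :
    ∀ Y : Submodule ℂ H, inGinf Y → O Y = ⊥ ∧ f Y = Submodule.span ℂ (L '' Y) := by
  obtain ⟨X, hX, hOX⟩ := hO
  intro Y hY
  have hmain : O Y = ⊥ := by
    have hXfd : ¬ FiniteDimensional ℂ X := hX.2.1
    have hVfd : ¬ FiniteDimensional ℂ (Yᗮ) := hY.2.2
    set x : ℕ → H := fun k => useq X Yᗮ (2*k) with hxdef
    set w : ℕ → H := fun k => useq X Yᗮ (2*k+1) with hwdef
    have hxmem : ∀ k, x k ∈ X := fun k => useq_mem_even hXfd hVfd k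
    have hwmem : ∀ k, w k ∈ Yᗮ := fun k => useq_mem_odd hXfd hVfd k
    have hxx : ∀ m n, ⟪x m, x n⟫_ℂ = if m = n then 1 else 0 := by
      intro m n
      by_cases h : m = n
      · subst h; rw [if_pos rfl]; exact (useq_spec hXfd hVfd _).2.1
      · rw [if_neg h]; exact useq_orth hXfd hVfd (by omega)
    have hww : ∀ m n, ⟪w m, w n⟫_ℂ = if m = n then 1 else 0 := by
      intro m n
      by_cases h : m = n
      · subst h; rw [if_pos rfl]; exact (useq_spec hXfd hVfd _).2.1
      · rw [if_neg h]; exact useq_orth hXfd hVfd (by omega)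
    have hxw : ∀ m n, ⟪x m, w n⟫_ℂ = 0 := fun m n => useq_orth hXfd hVfd (by omega)
    have hwx : ∀ m n, ⟪w m, x n⟫_ℂ = 0 := fun m n => useq_orth hXfd hVfd (by omega)
    obtain ⟨g, hgmem, hgg, hgcomp⟩ := onbseq Y hY.1 hY.2.1
    have hgw : ∀ m n, ⟪g m, w n⟫_ℂ = 0 := fun m n =>
      (Submodule.mem_orthogonal Y (w n)).mp (hwmem n) (g m) (hgmem m)
    have hwg : ∀ m n, ⟪w m, g n⟫_ℂ = 0 := fun m n => inner_eq_zero_symm.mp (hgw n m)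
    -- diagonal families
    set c : ℕ → H := fun n => x n + w n with hcdef
    set c2 : ℕ → H := fun n => w n + g n with hc2def
    set d : ℕ → H := fun n => x n - w n with hddef
    set d2 : ℕ → H := fun n => w n - g n with hd2def
    have icc : ∀ m n, ⟪c m, c n⟫_ℂ = if m = n then 2 else 0 := by
      intro m n
      simp only [hcdef, inner_add_left, inner_add_right, hxx m n, hww m n, hxw m n, hwx m n]
      split_ifs <;> norm_num
    have icd : ∀ m n, ⟪c m, d n⟫_ℂ = 0 := by
      intro m n
      simp only [hcdef, hddef, inner_sub_right, inner_add_left, hxx m n, hww m n, hxw m n, hwx m n]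
      split_ifs <;> ring
    have idd : ∀ m n, ⟪d m, d n⟫_ℂ = if m = n then 2 else 0 := by
      intro m n
      simp only [hddef, inner_sub_left, inner_sub_right, hxx m n, hww m n, hxw m n, hwx m n]
      split_ifs <;> ring
    have icc2 : ∀ m n, ⟪c2 m, c2 n⟫_ℂ = if m = n then 2 else 0 := by
      intro m n
      simp only [hc2def, inner_add_left, inner_add_right, hww m n, hgg m n, hwg m n, hgw m n]
      split_ifs <;> norm_num
    have icd2 : ∀ m n, ⟪c2 m, d2 n⟫_ℂ = 0 := by
      intro m n
      simp only [hc2def, hd2def, inner_sub_right, inner_add_left, hww m n, hgg m n, hwg m n,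
        hgw m n]
      split_ifs <;> ring
    have idd2 : ∀ m n, ⟪d2 m, d2 n⟫_ℂ = if m = n then 2 else 0 := by
      intro m n
      simp only [hd2def, inner_sub_left, inner_sub_right, hww m n, hgg m n, hwg m n, hgw m n]
      split_ifs <;> ring
    -- nonzero facts
    have two_ne : (2 : ℂ) ≠ 0 := by norm_num
    have hx0 : ∀ n, x n ≠ 0 := by
      intro n h
      have h1 := hxx n n
      rw [if_pos rfl, h, inner_zero_left] at h1
      exact one_ne_zero h1.symm
    have hw0 : ∀ n, w n ≠ 0 := by
      intro n h
      have h1 := hww n n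
      rw [if_pos rfl, h, inner_zero_left] at h1
      exact one_ne_zero h1.symm
    have hc0 : ∀ n, c n ≠ 0 := by
      intro n h
      have h1 := icc n n
      rw [if_pos rfl, h, inner_zero_left] at h1
      exact two_ne h1.symm
    have hd0 : ∀ n, d n ≠ 0 := by
      intro n h
      have h1 := idd n n
      rw [if_pos rfl, h, inner_zero_left] at h1
      exact two_ne h1.symm
    have hc20 : ∀ n, c2 n ≠ 0 := by
      intro n h
      have h1 := icc2 n n
      rw [if_pos rfl, h, inner_zero_left] at h1
      exact two_ne h1.symm
    have hd20 : ∀ n, d2 n ≠ 0 := by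
      intro n h
      have h1 := idd2 n n
      rw [if_pos rfl, h, inner_zero_left] at h1
      exact two_ne h1.symm
    -- the subspaces
    set A1 := (Submodule.span ℂ (Set.range x)).topologicalClosure with hA1def
    set C := (Submodule.span ℂ (Set.range c)).topologicalClosure with hCdef
    set W := (Submodule.span ℂ (Set.range w)).topologicalClosure with hWdef
    set C2 := (Submodule.span ℂ (Set.range c2)).topologicalClosure with hC2def
    -- inGinf facts
    have pw : ∀ (v : ℕ → H), (∀ m n, ⟪v m, v n⟫_ℂ = if m = n then 1 else 0) →
        Pairwise fun i j => ⟪v i, v j⟫_ℂ = 0 := by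
      intro v hv i j hij
      rw [hv i j, if_neg hij]
    have pw2 : ∀ (v : ℕ → H), (∀ m n, ⟪v m, v n⟫_ℂ = if m = n then 2 else 0) →
        Pairwise fun i j => ⟪v i, v j⟫_ℂ = 0 := by
      intro v hv i j hij
      rw [hv i j, if_neg hij]
    have hginfA1 : inGinf A1 := by
      refine ⟨Submodule.isClosed_topologicalClosure _,
        notFD _ x hx0 (pw x hxx) (fun n => mem_cl_span x n),
        notFD _ w hw0 (pw w hww) (fun n => ?_)⟩
      exact (Submodule.mem_orthogonal _ _).mpr (fun u hu => ipz x (w n) (fun m => hxw m n) u hu)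
    have hginfC : inGinf C := by
      refine ⟨Submodule.isClosed_topologicalClosure _,
        notFD _ c hc0 (pw2 c icc) (fun n => mem_cl_span c n),
        notFD _ d hd0 (pw2 d idd) (fun n => ?_)⟩
      exact (Submodule.mem_orthogonal _ _).mpr (fun u hu => ipz c (d n) (fun m => icd m n) u hu)
    have hginfW : inGinf W := by
      refine ⟨Submodule.isClosed_topologicalClosure _,
        notFD _ w hw0 (pw w hww) (fun n => mem_cl_span w n),
        notFD _ x hx0 (pw x hxx) (fun n => ?_)⟩
      exact (Submodule.mem_orthogonal _ _).mpr (fun u hu => ipz w (x n) (fun m => hwx m n) u hu)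
    have hginfC2 : inGinf C2 := by
      refine ⟨Submodule.isClosed_topologicalClosure _,
        notFD _ c2 hc20 (pw2 c2 icc2) (fun n => mem_cl_span c2 n),
        notFD _ d2 hd20 (pw2 d2 idd2) (fun n => ?_)⟩
      exact (Submodule.mem_orthogonal _ _).mpr (fun u hu => ipz c2 (d2 n) (fun m => icd2 m n) u hu)
    -- reflections
    have hreflC : ∀ n, ∀ v ∈ C, ⟪x n, v⟫_ℂ = ⟪w n, v⟫_ℂ := by
      intro n v hv
      have h0 : ⟪v, d n⟫_ℂ = 0 := ipz c (d n) (fun m => icd m n) v hv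
      have h1 : ⟪d n, v⟫_ℂ = 0 := inner_eq_zero_symm.mp h0
      rw [hddef] at h1
      simp only [inner_sub_left] at h1
      exact sub_eq_zero.mp h1
    have hreflC2 : ∀ n, ∀ v ∈ C2, ⟪w n, v⟫_ℂ = ⟪g n, v⟫_ℂ := by
      intro n v hv
      have h0 : ⟪v, d2 n⟫_ℂ = 0 := ipz c2 (d2 n) (fun m => icd2 m n) v hv
      have h1 : ⟪d2 n, v⟫_ℂ = 0 := inner_eq_zero_symm.mp h0
      rw [hd2def] at h1
      simp only [inner_sub_left] at h1
      exact sub_eq_zero.mp h1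
    -- chain
    have hA1leX : A1 ≤ X :=
      Submodule.topologicalClosure_minimal _
        (Submodule.span_le.mpr (by rintro _ ⟨k, rfl⟩; exact hxmem k)) hX.1
    have hOA1 : O A1 = ⊥ := downlem hpair hL hdec hX hginfA1 hOX hA1leX
    have hOC : O C = ⊥ := by
      refine hoplem hpair hL hdec hginfA1 hginfC hOA1 ?_ ?_
      · -- v ∈ A1, orth to C → v = 0
        intro v hv hvC
        have hwv : ∀ n, ⟪w n, v⟫_ℂ = 0 := fun n =>
          inner_eq_zero_symm.mp (ipz x (w n) (fun m => hxw m n) v hv)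
        have hcv : ∀ n, ⟪c n, v⟫_ℂ = 0 := fun n => hvC (c n) (mem_cl_span c n)
        have hxv : ∀ n, ⟪x n, v⟫_ℂ = 0 := by
          intro n
          have := hcv n
          rw [hcdef] at this
          simp only [inner_add_left, hwv n, add_zero] at this
          exact this
        exact selfkill x hv hxv
      · -- v ∈ C, orth to A1 → v = 0
        intro v hv hvA
        have hxv : ∀ n, ⟪x n, v⟫_ℂ = 0 := fun n => hvA (x n) (mem_cl_span x n)
        have hwv : ∀ n, ⟪w n, v⟫_ℂ = 0 := fun n => (hreflC n v hv) ▸ hxv n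
        have hcv : ∀ n, ⟪c n, v⟫_ℂ = 0 := by
          intro n
          rw [hcdef]
          simp only [inner_add_left, hxv n, hwv n, add_zero]
        exact selfkill c hv hcv
    have hOW : O W = ⊥ := by
      refine hoplem hpair hL hdec hginfC hginfW hOC ?_ ?_
      · -- v ∈ C, orth to W → v = 0
        intro v hv hvW
        have hwv : ∀ n, ⟪w n, v⟫_ℂ = 0 := fun n => hvW (w n) (mem_cl_span w n)
        have hxv : ∀ n, ⟪x n, v⟫_ℂ = 0 := fun n => (hreflC n v hv).trans (hwv n)
        have hcv : ∀ n, ⟪c n, v⟫_ℂ = 0 := by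
          intro n
          rw [hcdef]
          simp only [inner_add_left, hxv n, hwv n, add_zero]
        exact selfkill c hv hcv
      · -- v ∈ W, orth to C → v = 0
        intro v hv hvC
        have hcv : ∀ n, ⟪c n, v⟫_ℂ = 0 := fun n => hvC (c n) (mem_cl_span c n)
        have hxv : ∀ n, ⟪x n, v⟫_ℂ = 0 := fun n =>
          inner_eq_zero_symm.mp (ipz w (x n) (fun m => hwx m n) v hv)
        have hwv : ∀ n, ⟪w n, v⟫_ℂ = 0 := by
          intro n
          have := hcv n
          rw [hcdef] at this
          simp only [inner_add_left, hxv n, zero_add] at this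
          exact this
        exact selfkill w hv hwv
    have hWleYp : W ≤ Yᗮ :=
      Submodule.topologicalClosure_minimal _
        (Submodule.span_le.mpr (by rintro _ ⟨k, rfl⟩; exact hwmem k))
        (Submodule.isClosed_orthogonal Y)
    have hOC2 : O C2 = ⊥ := by
      refine hoplem hpair hL hdec hginfW hginfC2 hOW ?_ ?_
      · -- v ∈ W, orth to C2 → v = 0
        intro v hv hvC2
        have hgv : ∀ n, ⟪g n, v⟫_ℂ = 0 := fun n =>
          (Submodule.mem_orthogonal Y v).mp (hWleYp hv) (g n) (hgmem n)
        have hc2v : ∀ n, ⟪c2 n, v⟫_ℂ = 0 := fun n => hvC2 (c2 n) (mem_cl_span c2 n)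
        have hwv : ∀ n, ⟪w n, v⟫_ℂ = 0 := by
          intro n
          have := hc2v n
          rw [hc2def] at this
          simp only [inner_add_left, hgv n, add_zero] at this
          exact this
        exact selfkill w hv hwv
      · -- v ∈ C2, orth to W → v = 0
        intro v hv hvW
        have hwv : ∀ n, ⟪w n, v⟫_ℂ = 0 := fun n => hvW (w n) (mem_cl_span w n)
        have hgv : ∀ n, ⟪g n, v⟫_ℂ = 0 := fun n => (hreflC2 n v hv) ▸ hwv n
        have hc2v : ∀ n, ⟪c2 n, v⟫_ℂ = 0 := by
          intro n
          rw [hc2def]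
          simp only [inner_add_left, hwv n, hgv n, add_zero]
        exact selfkill c2 hv hc2v
    -- final hop into Y
    refine hoplem hpair hL hdec hginfC2 hY hOC2 ?_ ?_
    · -- v ∈ C2, orth to Y → v = 0
      intro v hv hvY
      have hgv : ∀ n, ⟪g n, v⟫_ℂ = 0 := fun n => hvY (g n) (hgmem n)
      have hwv : ∀ n, ⟪w n, v⟫_ℂ = 0 := fun n => (hreflC2 n v hv).trans (hgv n)
      have hc2v : ∀ n, ⟪c2 n, v⟫_ℂ = 0 := by
        intro n
        rw [hc2def]
        simp only [inner_add_left, hwv n, hgv n, add_zero]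
      exact selfkill c2 hv hc2v
    · -- v ∈ Y, orth to C2 → v = 0
      intro v hv hvC2
      have hc2v : ∀ n, ⟪c2 n, v⟫_ℂ = 0 := fun n => hvC2 (c2 n) (mem_cl_span c2 n)
      have hwv : ∀ n, ⟪w n, v⟫_ℂ = 0 := fun n =>
        inner_eq_zero_symm.mp ((Submodule.mem_orthogonal Y (w n)).mp (hwmem n) v hv)
      have hgv : ∀ n, ⟪g n, v⟫_ℂ = 0 := by
        intro n
        have := hc2v n
        rw [hc2def] at this
        simp only [inner_add_left, hwv n, zero_add] at this
        exact this
      exact hgcomp v hv hgv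
  exact ⟨hmain, by rw [(hdec Y hY).2.2, hmain, sup_bot_eq]⟩
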